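/- Let g : ZMod N → ℂ satisfy ⟨g, Π_{(p,ℓ)} g⟩ ≠ 0 for p ∈ {0, 1} and every ℓ ∈ ZMod N. Then the full Gabor system (g_λ)_{λ ∈ (ZMod N)²} allows phase retrieval for non-vanishing signals: for all x, y : ZMod N → ℂ with x(n) ≠ 0 and y(n) ≠ 0 for every n ∈ ZMod N, if |⟨x, g_λ⟩| = |⟨y, g_λ⟩| for every λ ∈ (ZMod N)², then there exists c ∈ ℂ with |c| = 1 and x = c • y. -/

import Mathlib

open Complex Finset

/-- `gw N m = ω^m` where `ω = exp(2πi/N)` and `m : ZMod N`. -/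
noncomputable def gw (N : ℕ) (m : ZMod N) : ℂ :=
  Complex.exp (2 * Real.pi * Complex.I * (m.val : ℂ) / (N : ℂ))

/-- Translation operator `(T_p x)(n) = x(n-p)`. -/
def Tr (N : ℕ) (p : ZMod N) (x : ZMod N → ℂ) : ZMod N → ℂ :=
  fun n => x (n - p)

/-- Modulation operator `(M_ℓ x)(n) = ω^{ℓ·n} x(n)`. -/
noncomputable def Md (N : ℕ) (l : ZMod N) (x : ZMod N → ℂ) : ZMod N → ℂ :=
  fun n => gw N (l * n) * x n

/-- Time-frequency shift `Π_{(p,ℓ)} = M_ℓ ∘ T_p`. -/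
noncomputable def Pig (N : ℕ) (p l : ZMod N) (x : ZMod N → ℂ) : ZMod N → ℂ :=
  Md N l (Tr N p x)

/-- Inner product, conjugate linear in the first argument. -/
noncomputable def inn (N : ℕ) [NeZero N] (x y : ZMod N → ℂ) : ℂ :=
  ∑ j : ZMod N, (starRingEnd ℂ) (x j) * y j

lemma gw_eq_pow (N : ℕ) (m : ZMod N) :
    gw N m = Complex.exp (2 * Real.pi * Complex.I / N) ^ m.val := by
  rw [← Complex.exp_nat_mul]
  unfold gw
  congr 1
  ring

lemma zeta_pow (N : ℕ) [NeZero N] : Complex.exp (2 * Real.pi * Complex.I / N) ^ N = 1 :=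
  (Complex.isPrimitiveRoot_exp N (NeZero.ne N)).pow_eq_one

lemma pow_val_mod {N : ℕ} (ζ : ℂ) (hζ : ζ ^ N = 1) (a : ℕ) : ζ ^ (a % N) = ζ ^ a := by
  conv_rhs => rw [← Nat.div_add_mod a N]
  rw [pow_add, pow_mul, hζ, one_pow, one_mul]

lemma gw_add (N : ℕ) [NeZero N] (a b : ZMod N) : gw N (a + b) = gw N a * gw N b := by
  rw [gw_eq_pow, gw_eq_pow, gw_eq_pow, ← pow_add, ZMod.val_add,
    pow_val_mod _ (zeta_pow N)]

lemma gw_zero (N : ℕ) [NeZero N] : gw N 0 = 1 := by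
  rw [gw_eq_pow, ZMod.val_zero, pow_zero]

lemma gw_ne_zero (N : ℕ) (m : ZMod N) : gw N m ≠ 0 := Complex.exp_ne_zero _

lemma gw_ne_one (N : ℕ) [NeZero N] {m : ZMod N} (hm : m ≠ 0) : gw N m ≠ 1 := by
  rw [gw_eq_pow]
  exact (Complex.isPrimitiveRoot_exp N (NeZero.ne N)).pow_ne_one_of_pos_of_lt
    (ZMod.val_pos.mpr hm).ne' (ZMod.val_lt m)

lemma gw_conj (N : ℕ) [NeZero N] (t : ZMod N) :
    (starRingEnd ℂ) (gw N t) = gw N (-t) := by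
  have habs : ‖gw N t‖ = 1 := by
    unfold gw
    rw [show 2 * Real.pi * Complex.I * (t.val : ℂ) / (N : ℂ)
        = ((2 * Real.pi * t.val / N : ℝ) : ℂ) * Complex.I by push_cast; ring]
    exact Complex.norm_exp_ofReal_mul_I _
  have h2 : (starRingEnd ℂ) (gw N t) * gw N t = 1 := by
    rw [mul_comm, Complex.mul_conj, ← Complex.sq_norm, habs]
    norm_num
  have h1 : gw N (-t) * gw N t = 1 := by
    rw [← gw_add]; simp [gw_zero]
  exact mul_right_cancel₀ (gw_ne_zero N t) (h2.trans h1.symm)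

lemma sum_gw (N : ℕ) [NeZero N] (m : ZMod N) :
    ∑ k : ZMod N, gw N (m * k) = if m = 0 then (N : ℂ) else 0 := by
  split_ifs with h
  · simp [h, gw_zero, Finset.card_univ, ZMod.card]
  · have key : gw N m * ∑ k : ZMod N, gw N (m * k) = ∑ k : ZMod N, gw N (m * k) := by
      rw [Finset.mul_sum]
      exact Fintype.sum_equiv (Equiv.addRight (1 : ZMod N)) _ _ (fun k => by
        rw [← gw_add]; congr 1; simp [mul_add]; ring)
    have h0 : (gw N m - 1) * ∑ k : ZMod N, gw N (m * k) = 0 := by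
      rw [sub_mul, one_mul, key, sub_self]
    rcases mul_eq_zero.mp h0 with h1 | h1
    · exact absurd (sub_eq_zero.mp h1) (gw_ne_one N h)
    · exact h1

lemma sum_gw' (N : ℕ) [NeZero N] (m : ZMod N) :
    ∑ k : ZMod N, gw N (k * m) = if m = 0 then (N : ℂ) else 0 := by
  rw [← sum_gw N m]; exact Finset.sum_congr rfl fun k _ => by rw [mul_comm]

lemma inversion (N : ℕ) [NeZero N] (u : ZMod N → ℂ)
    (h : ∀ k : ZMod N, ∑ n : ZMod N, u n * gw N (k * n) = 0) : ∀ n, u n = 0 := by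
  intro n0
  have hN : (N : ℂ) ≠ 0 := Nat.cast_ne_zero.mpr (NeZero.ne N)
  have key : ∑ k : ZMod N, (∑ n : ZMod N, u n * gw N (k * n)) * gw N (-(k * n0))
      = (N : ℂ) * u n0 := by
    calc ∑ k : ZMod N, (∑ n : ZMod N, u n * gw N (k * n)) * gw N (-(k * n0))
        = ∑ k : ZMod N, ∑ n : ZMod N, u n * gw N ((n - n0) * k) := by
          refine Finset.sum_congr rfl fun k _ => ?_
          rw [Finset.sum_mul]
          refine Finset.sum_congr rfl fun n _ => ?_
          rw [mul_assoc, ← gw_add]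
          congr 2
          ring
      _ = ∑ n : ZMod N, u n * ∑ k : ZMod N, gw N ((n - n0) * k) := by
          rw [Finset.sum_comm]
          exact Finset.sum_congr rfl fun n _ => by rw [← Finset.mul_sum]
      _ = ∑ n : ZMod N, u n * (if n = n0 then (N : ℂ) else 0) := by
          refine Finset.sum_congr rfl fun n _ => ?_
          rw [sum_gw]
          simp [sub_eq_zero]
      _ = (N : ℂ) * u n0 := by
          simp [mul_ite, Finset.sum_ite_eq', mul_comm]
  rw [show (∑ k : ZMod N, (∑ n : ZMod N, u n * gw N (k * n)) * gw N (-(k * n0))) = 0 from by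
    simp [h]] at key
  exact (mul_eq_zero.mp key.symm).resolve_left hN

lemma deconv (N : ℕ) [NeZero N] (u v : ZMod N → ℂ)
    (hv : ∀ k : ZMod N, ∑ n : ZMod N, v n * gw N (k * n) ≠ 0)
    (h : ∀ p : ZMod N, ∑ n : ZMod N, u n * v (n - p) = 0) : ∀ n, u n = 0 := by
  apply inversion N u
  intro k
  have key : ∑ p : ZMod N, (∑ n : ZMod N, u n * v (n - p)) * gw N (k * p)
      = (∑ n : ZMod N, u n * gw N (k * n)) * (∑ m : ZMod N, v m * gw N ((-k) * m)) := by
    calc ∑ p : ZMod N, (∑ n : ZMod N, u n * v (n - p)) * gw N (k * p)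
        = ∑ p : ZMod N, ∑ n : ZMod N, u n * v (n - p) * gw N (k * p) := by
          exact Finset.sum_congr rfl fun p _ => by rw [Finset.sum_mul]
      _ = ∑ n : ZMod N, ∑ m : ZMod N, (u n * gw N (k * n)) * (v m * gw N ((-k) * m)) := by
          rw [Finset.sum_comm]
          refine Finset.sum_congr rfl fun n _ => ?_
          refine Fintype.sum_equiv (Equiv.subLeft n) _ _ fun m => ?_
          simp only [Equiv.subLeft_apply, sub_sub_cancel]
          rw [show gw N (k * m) = gw N (k * n) * gw N (-k * (n - m)) from by
            rw [← gw_add]; congr 1; ring]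
          ring
      _ = _ := by rw [← Finset.sum_mul_sum]
  rw [show (∑ p : ZMod N, (∑ n : ZMod N, u n * v (n - p)) * gw N (k * p)) = 0 from by
    simp [h]] at key
  exact (mul_eq_zero.mp key.symm).resolve_right (hv (-k))

lemma magsum (N : ℕ) [NeZero N] (x g : ZMod N → ℂ) (p k : ZMod N) :
    ∑ l : ZMod N, (starRingEnd ℂ) (inn N x (Pig N p l g)) * inn N x (Pig N p l g) * gw N (k * l)
    = (N : ℂ) * ∑ n : ZMod N,
        (starRingEnd ℂ) (x n) * x (n + k) * ((starRingEnd ℂ) (g (n + k - p)) * g (n - p)) := by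
  unfold inn Pig Md Tr
  have C : ZMod N → ZMod N → ℂ := fun m n =>
    x m * (starRingEnd ℂ) (g (m - p)) * (starRingEnd ℂ) (x n) * g (n - p)
  calc ∑ l : ZMod N, (starRingEnd ℂ) (∑ m : ZMod N, (starRingEnd ℂ) (x m) * (gw N (l * m) * g (m - p)))
          * (∑ n : ZMod N, (starRingEnd ℂ) (x n) * (gw N (l * n) * g (n - p))) * gw N (k * l)
      = ∑ l : ZMod N, ∑ m : ZMod N, ∑ n : ZMod N,
          (x m * (starRingEnd ℂ) (g (m - p)) * (starRingEnd ℂ) (x n) * g (n - p))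
            * gw N (l * (n - m + k)) := by
        refine Finset.sum_congr rfl fun l _ => ?_
        rw [map_sum, Finset.sum_mul_sum, Finset.sum_mul]
        refine Finset.sum_congr rfl fun m _ => ?_
        rw [Finset.sum_mul]
        refine Finset.sum_congr rfl fun n _ => ?_
        rw [map_mul, map_mul, Complex.conj_conj, gw_conj]
        rw [show gw N (l * (n - m + k)) = gw N (-(l * m)) * gw N (l * n) * gw N (k * l) from by
          rw [← gw_add, ← gw_add]; congr 1; ring]
        ring
    _ = ∑ m : ZMod N, ∑ n : ZMod N,
          (x m * (starRingEnd ℂ) (g (m - p)) * (starRingEnd ℂ) (x n) * g (n - p))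
            * ∑ l : ZMod N, gw N (l * (n - m + k)) := by
        rw [Finset.sum_comm]
        refine Finset.sum_congr rfl fun m _ => ?_
        rw [Finset.sum_comm]
        exact Finset.sum_congr rfl fun n _ => by rw [← Finset.mul_sum]
    _ = ∑ n : ZMod N, ∑ m : ZMod N,
          (x m * (starRingEnd ℂ) (g (m - p)) * (starRingEnd ℂ) (x n) * g (n - p))
            * (if m = n + k then (N : ℂ) else 0) := by
        rw [Finset.sum_comm]
        refine Finset.sum_congr rfl fun n _ => Finset.sum_congr rfl fun m _ => ?_
        rw [sum_gw']
        have hiff : (n - m + k = 0) ↔ (m = n + k) :=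
          ⟨fun h => by linear_combination -h, fun h => by rw [h]; ring⟩
        simp only [hiff]
    _ = (N : ℂ) * ∑ n : ZMod N,
        (starRingEnd ℂ) (x n) * x (n + k) * ((starRingEnd ℂ) (g (n + k - p)) * g (n - p)) := by
        rw [Finset.mul_sum]
        refine Finset.sum_congr rfl fun n _ => ?_
        simp only [mul_ite, mul_zero]
        rw [Finset.sum_ite_eq' Finset.univ (n + k)
          (fun m => x m * (starRingEnd ℂ) (g (m - p)) * (starRingEnd ℂ) (x n) * g (n - p) * (N : ℂ))]
        · simp only [Finset.mem_univ, if_true]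
          ring

/-- phase retrieval -/
theorem Gabor_phase_retrieval_nonvanishing (N : ℕ) [NeZero N] (g : ZMod N → ℂ)
    (hg : ∀ p ∈ ({0, 1} : Set (ZMod N)), ∀ l : ZMod N, inn N g (Pig N p l g) ≠ 0) :
    ∀ x y : ZMod N → ℂ, (∀ n : ZMod N, x n ≠ 0) → (∀ n : ZMod N, y n ≠ 0) →
      (∀ p l : ZMod N,
        ‖inn N x (Pig N p l g)‖ = ‖inn N y (Pig N p l g)‖) →
      ∃ c : ℂ, ‖c‖ = 1 ∧ x = c • y := by
  intro x y hx hy habs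
  have hN : (N : ℂ) ≠ 0 := Nat.cast_ne_zero.mpr (NeZero.ne N)
  have haux : ∀ z w : ℂ, ‖z‖ = ‖w‖ →
      (starRingEnd ℂ) z * z = (starRingEnd ℂ) w * w := by
    intro z w h
    rw [mul_comm, Complex.mul_conj, mul_comm ((starRingEnd ℂ) w), Complex.mul_conj,
      ← Complex.sq_norm, ← Complex.sq_norm, h]
  have main : ∀ k p : ZMod N,
      ∑ n : ZMod N, (starRingEnd ℂ) (x n) * x (n + k) * ((starRingEnd ℂ) (g (n + k - p)) * g (n - p))
      = ∑ n : ZMod N, (starRingEnd ℂ) (y n) * y (n + k) * ((starRingEnd ℂ) (g (n + k - p)) * g (n - p)) := by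
    intro k p
    have h1 := magsum N x g p k
    have h2 := magsum N y g p k
    have h3 : ∑ l : ZMod N, (starRingEnd ℂ) (inn N x (Pig N p l g)) * inn N x (Pig N p l g) * gw N (k * l)
        = ∑ l : ZMod N, (starRingEnd ℂ) (inn N y (Pig N p l g)) * inn N y (Pig N p l g) * gw N (k * l) :=
      Finset.sum_congr rfl fun l _ =>
        congrArg (· * gw N (k * l)) (haux _ _ (habs p l))
    exact mul_left_cancel₀ hN (h1.symm.trans (h3.trans h2))
  have hsq : ∀ n : ZMod N, (starRingEnd ℂ) (x n) * x n = (starRingEnd ℂ) (y n) * y n := by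
    have hdec := deconv N
      (fun n => (starRingEnd ℂ) (x n) * x n - (starRingEnd ℂ) (y n) * y n)
      (fun n => (starRingEnd ℂ) (g n) * g n)
      (by
        intro l
        have hgl := hg 0 (Set.mem_insert _ _) l
        have he : ∑ n : ZMod N, ((starRingEnd ℂ) (g n) * g n) * gw N (l * n)
            = inn N g (Pig N 0 l g) := by
          unfold inn Pig Md Tr
          refine Finset.sum_congr rfl fun n _ => ?_
          rw [sub_zero]; ring
        rw [he]; exact hgl)
      (by
        intro p
        have hm := main 0 p
        simp only [add_zero] at hm
        calc ∑ n : ZMod N, ((starRingEnd ℂ) (x n) * x n - (starRingEnd ℂ) (y n) * y n)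
              * ((starRingEnd ℂ) (g (n - p)) * g (n - p))
            = (∑ n : ZMod N, (starRingEnd ℂ) (x n) * x n * ((starRingEnd ℂ) (g (n - p)) * g (n - p)))
              - ∑ n : ZMod N, (starRingEnd ℂ) (y n) * y n * ((starRingEnd ℂ) (g (n - p)) * g (n - p)) := by
              rw [← Finset.sum_sub_distrib]
              exact Finset.sum_congr rfl fun n _ => by ring
          _ = 0 := by rw [hm, sub_self])
    intro n
    exact sub_eq_zero.mp (hdec n)
  have hsh : ∀ n : ZMod N, (starRingEnd ℂ) (x n) * x (n - 1) = (starRingEnd ℂ) (y n) * y (n - 1) := by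
    have hdec := deconv N
      (fun n => (starRingEnd ℂ) (x n) * x (n - 1) - (starRingEnd ℂ) (y n) * y (n - 1))
      (fun n => (starRingEnd ℂ) (g (n - 1)) * g n)
      (by
        intro l
        have he : ∑ n : ZMod N, ((starRingEnd ℂ) (g (n - 1)) * g n) * gw N (l * n)
            = (starRingEnd ℂ) (inn N g (Pig N 1 (-l) g)) := by
          unfold inn Pig Md Tr
          rw [map_sum]
          refine Finset.sum_congr rfl fun n _ => ?_
          rw [map_mul, map_mul, Complex.conj_conj, gw_conj]
          rw [show -(-l * n) = l * n from by ring]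
          ring
        rw [he]
        intro h0
        exact hg 1 (Set.mem_insert_iff.mpr (Or.inr rfl)) (-l) (by
          have h1 := congrArg (starRingEnd ℂ) h0
          rwa [Complex.conj_conj, map_zero] at h1))
      (by
        intro p
        have hm := main (-1) p
        calc ∑ n : ZMod N, ((starRingEnd ℂ) (x n) * x (n - 1) - (starRingEnd ℂ) (y n) * y (n - 1))
              * ((starRingEnd ℂ) (g (n - p - 1)) * g (n - p))
            = (∑ n : ZMod N, (starRingEnd ℂ) (x n) * x (n + (-1))
                * ((starRingEnd ℂ) (g (n + (-1) - p)) * g (n - p)))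
              - ∑ n : ZMod N, (starRingEnd ℂ) (y n) * y (n + (-1))
                * ((starRingEnd ℂ) (g (n + (-1) - p)) * g (n - p)) := by
              rw [← Finset.sum_sub_distrib]
              refine Finset.sum_congr rfl fun n _ => ?_
              rw [show n + (-1) = n - 1 from by ring, show n - 1 - p = n - p - 1 from by ring]
              ring
          _ = 0 := by rw [hm, sub_self])
    intro n
    exact sub_eq_zero.mp (hdec n)
  have key2 : ∀ n : ZMod N, y n * x (n - 1) = x n * y (n - 1) := by
    intro n
    have hcy : (starRingEnd ℂ) (y n) ≠ 0 := by
      rw [starRingEnd_apply]; exact star_ne_zero.mpr (hy n)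
    refine mul_left_cancel₀ hcy ?_
    calc (starRingEnd ℂ) (y n) * (y n * x (n - 1))
        = ((starRingEnd ℂ) (y n) * y n) * x (n - 1) := by ring
      _ = ((starRingEnd ℂ) (x n) * x n) * x (n - 1) := by rw [hsq n]
      _ = x n * ((starRingEnd ℂ) (x n) * x (n - 1)) := by ring
      _ = x n * ((starRingEnd ℂ) (y n) * y (n - 1)) := by rw [hsh n]
      _ = (starRingEnd ℂ) (y n) * (x n * y (n - 1)) := by ring
  have key3 : ∀ m : ℕ, x (m : ZMod N) * y 0 = x 0 * y (m : ZMod N) := by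
    intro m
    induction m with
    | zero => push_cast; ring
    | succ m ih =>
      have h1 := key2 ((m : ZMod N) + 1)
      rw [add_sub_cancel_right] at h1
      push_cast
      refine mul_right_cancel₀ (hy (m : ZMod N)) ?_
      calc x ((m : ZMod N) + 1) * y 0 * y (m : ZMod N)
          = (x ((m : ZMod N) + 1) * y (m : ZMod N)) * y 0 := by ring
        _ = (y ((m : ZMod N) + 1) * x (m : ZMod N)) * y 0 := by rw [← h1]
        _ = y ((m : ZMod N) + 1) * (x (m : ZMod N) * y 0) := by ring
        _ = y ((m : ZMod N) + 1) * (x 0 * y (m : ZMod N)) := by rw [ih]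
        _ = x 0 * y ((m : ZMod N) + 1) * y (m : ZMod N) := by ring
  have key4 : ∀ n : ZMod N, x n * y 0 = x 0 * y n := by
    intro n
    obtain ⟨m, rfl⟩ := ZMod.natCast_zmod_surjective n
    exact key3 m
  refine ⟨x 0 / y 0, ?_, ?_⟩
  · have habs0 : ‖x 0‖ = ‖y 0‖ := by
      have hc : (Complex.normSq (x 0) : ℂ) = (Complex.normSq (y 0) : ℂ) := by
        rw [← Complex.mul_conj, ← Complex.mul_conj, mul_comm, mul_comm (y 0), hsq 0]
      have hr : Complex.normSq (x 0) = Complex.normSq (y 0) := by exact_mod_cast hc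
      rw [Complex.norm_def, Complex.norm_def, hr]
    rw [norm_div, habs0, div_self (norm_ne_zero_iff.mpr (hy 0))]
  · funext n
    show x n = (x 0 / y 0) * y n
    rw [div_mul_eq_mul_div, eq_div_iff (hy 0)]
    linear_combination key4 n
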